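/- Let A be a vector space over a field k with a bilinear multiplication *, let L_X ∈ End(A) denote left multiplication L_X(Y) = X*Y, and let S be the Lie subalgebra of End(A) (with commutator bracket) generated by {L_X : X ∈ A}. On pairs (A,X) ∈ End(A) × A define the bracket [(A,X),(B,Y)] = ([A,B] − [L_X,L_Y] + L_{X*Y} − L_{Y*X}, A(Y) − B(X)). Then the Jacobi identity holds for all triples of pairs whose endomorphism components lie in S if and only if the algebra (A,*) satisfies identity (2.6): [X,Y,Z] + [Y,Z,X] + [Z,X,Y] = 0 and identity (2.7): V*[X,Y,Z] = [V*X,Y,Z] + [X,V*Y,Z] + [X,Y,V*Z] for all V,X,Y,Z ∈ A, where [X,Y,Z] = As(X,Y,Z) − As(Y,X,Z) and As(X,Y,Z) = (X*Y)*Z − X*(Y*Z). -/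

import Mathlib

attribute [local instance] LieRing.ofAssociativeRing

private def Dop {k A : Type*} [Field k] [AddCommGroup A] [Module k A]
    (mul : A →ₗ[k] A →ₗ[k] A) (Y Z : A) : Module.End k A :=
  mul (mul Y Z) - mul (mul Z Y) - ⁅mul Y, mul Z⁆

private lemma Dop_apply {k A : Type*} [Field k] [AddCommGroup A] [Module k A]
    (mul : A →ₗ[k] A →ₗ[k] A) (Y Z W : A) :
    Dop mul Y Z W = mul (mul Y Z) W - mul (mul Z Y) W - mul Y (mul Z W) + mul Z (mul Y W) := by
  simp [Dop, Ring.lie_def, Module.End.mul_apply, LinearMap.sub_apply]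
  abel

private lemma Dop_add_left {k A : Type*} [Field k] [AddCommGroup A] [Module k A]
    (mul : A →ₗ[k] A →ₗ[k] A) (a b Z : A) :
    Dop mul (a + b) Z = Dop mul a Z + Dop mul b Z := by
  simp only [Dop, map_add, LinearMap.add_apply, add_lie, lie_add]
  abel

private lemma Dop_add_right {k A : Type*} [Field k] [AddCommGroup A] [Module k A]
    (mul : A →ₗ[k] A →ₗ[k] A) (a b Y : A) :
    Dop mul Y (a + b) = Dop mul Y a + Dop mul Y b := by
  simp only [Dop, map_add, LinearMap.add_apply, add_lie, lie_add]
  abel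

private lemma Dop_sub_left {k A : Type*} [Field k] [AddCommGroup A] [Module k A]
    (mul : A →ₗ[k] A →ₗ[k] A) (a b Z : A) :
    Dop mul (a - b) Z = Dop mul a Z - Dop mul b Z := by
  simp only [Dop, map_sub, LinearMap.sub_apply, sub_lie, lie_sub]
  abel

private lemma Dop_sub_right {k A : Type*} [Field k] [AddCommGroup A] [Module k A]
    (mul : A →ₗ[k] A →ₗ[k] A) (a b Y : A) :
    Dop mul Y (a - b) = Dop mul Y a - Dop mul Y b := by
  simp only [Dop, map_sub, LinearMap.sub_apply, sub_lie, lie_sub]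
  abel

private lemma Dop_zero_left {k A : Type*} [Field k] [AddCommGroup A] [Module k A]
    (mul : A →ₗ[k] A →ₗ[k] A) (Z : A) : Dop mul 0 Z = 0 := by
  simp [Dop]

private lemma Dop_zero_right {k A : Type*} [Field k] [AddCommGroup A] [Module k A]
    (mul : A →ₗ[k] A →ₗ[k] A) (Y : A) : Dop mul Y 0 = 0 := by
  simp [Dop]

private lemma Dop_smul_left {k A : Type*} [Field k] [AddCommGroup A] [Module k A]
    (mul : A →ₗ[k] A →ₗ[k] A) (c : k) (a Z : A) :
    Dop mul (c • a) Z = c • Dop mul a Z := by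
  simp only [Dop, map_smul, LinearMap.smul_apply, smul_lie, lie_smul, smul_sub]

private lemma Dop_smul_right {k A : Type*} [Field k] [AddCommGroup A] [Module k A]
    (mul : A →ₗ[k] A →ₗ[k] A) (c : k) (a Y : A) :
    Dop mul Y (c • a) = c • Dop mul Y a := by
  simp only [Dop, map_smul, LinearMap.smul_apply, smul_lie, lie_smul, smul_sub]

private def derSub {k A : Type*} [Field k] [AddCommGroup A] [Module k A]
    (mul : A →ₗ[k] A →ₗ[k] A) : LieSubalgebra k (Module.End k A) where
  carrier := {T | ∀ Y Z : A, ⁅T, Dop mul Y Z⁆ = Dop mul (T Y) Z + Dop mul Y (T Z)}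
  add_mem' := by
    intro a b ha hb Y Z
    simp only [add_lie, LinearMap.add_apply, Dop_add_left, Dop_add_right, ha Y Z, hb Y Z]
    abel
  zero_mem' := by
    intro Y Z
    simp [Dop_zero_left, Dop_zero_right]
  smul_mem' := by
    intro c a ha Y Z
    simp only [smul_lie, LinearMap.smul_apply, Dop_smul_left, Dop_smul_right, ha Y Z, smul_add]
  lie_mem' := by
    intro a b ha hb Y Z
    have hab : ∀ W : A, (⁅a, b⁆ : Module.End k A) W = a (b W) - b (a W) := by
      intro W
      simp [Ring.lie_def, Module.End.mul_apply]
    rw [lie_lie, hb Y Z, ha Y Z, lie_add, lie_add, ha (b Y) Z, ha Y (b Z),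
      hb (a Y) Z, hb Y (a Z), hab Y, hab Z, Dop_sub_left, Dop_sub_right]
    abel

private lemma mem_derSub {k A : Type*} [Field k] [AddCommGroup A] [Module k A]
    (mul : A →ₗ[k] A →ₗ[k] A) (T : Module.End k A) :
    T ∈ derSub mul ↔ ∀ Y Z : A, ⁅T, Dop mul Y Z⁆ = Dop mul (T Y) Z + Dop mul Y (T Z) :=
  Iff.rfl


set_option maxHeartbeats 2000000 in
/-- For an algebra `(A,*)` with left multiplications `L_X`, `S` the Lie
subalgebra of `End(A)` generated by the `L_X`, and the bracket
`[(A,X),(B,Y)] = ([A,B] − [L_X,L_Y] + L_{X*Y} − L_{Y*X}, A(Y) − B(X))` on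
`End(A) × A`, the Jacobi identity holds on all triples with endomorphism
components in `S` iff `(A,*)` satisfies the G-algebra identities (2.6) and (2.7). -/
theorem stmt_3 {k A : Type*} [Field k] [AddCommGroup A] [Module k A]
    (mul : A →ₗ[k] A →ₗ[k] A)
    (S : LieSubalgebra k (Module.End k A))
    (hS : S = LieSubalgebra.lieSpan k (Module.End k A) (Set.range fun X => mul X))
    (br : Module.End k A × A → Module.End k A × A → Module.End k A × A)
    (hbr : ∀ p q, br p q =
      (⁅p.1, q.1⁆ - ⁅mul p.2, mul q.2⁆ + mul (mul p.2 q.2) - mul (mul q.2 p.2),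
       p.1 q.2 - q.1 p.2))
    (As : A → A → A → A)
    (hAs : ∀ X Y Z, As X Y Z = mul (mul X Y) Z - mul X (mul Y Z))
    (tri : A → A → A → A)
    (htri : ∀ X Y Z, tri X Y Z = As X Y Z - As Y X Z) :
    (∀ p q r : Module.End k A × A, p.1 ∈ S → q.1 ∈ S → r.1 ∈ S →
        br (br p q) r + br (br q r) p + br (br r p) q = 0) ↔
      ((∀ X Y Z, tri X Y Z + tri Y Z X + tri Z X Y = 0) ∧
       (∀ V X Y Z, mul V (tri X Y Z) =
          tri (mul V X) Y Z + tri X (mul V Y) Z + tri X Y (mul V Z))) := by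
  constructor
  · intro H
    have h0 : (0 : Module.End k A) ∈ S := S.zero_mem
    constructor
    · intro X Y Z
      have J := H (0, X) (0, Y) (0, Z) h0 h0 h0
      have e := congrArg Prod.snd J
      simp only [hbr, Prod.snd_add, Prod.snd_zero, Ring.lie_def, Module.End.mul_apply,
        LinearMap.sub_apply, LinearMap.add_apply, LinearMap.zero_apply, LinearMap.neg_apply, map_zero, map_sub,
        map_add, map_neg, mul_zero, zero_mul, sub_zero, zero_sub, sub_self, neg_sub, neg_neg] at e
      simp only [htri, hAs]
      linear_combination (norm := abel) e
    · intro V X Y Z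
      have hV : mul V ∈ S := hS ▸ LieSubalgebra.subset_lieSpan ⟨V, rfl⟩
      have J := H (mul V, 0) (0, X) (0, Y) hV h0 h0
      have e := LinearMap.congr_fun (congrArg Prod.fst J) Z
      simp only [hbr, Prod.fst_add, Prod.fst_zero, Ring.lie_def, Module.End.mul_apply,
        LinearMap.sub_apply, LinearMap.add_apply, LinearMap.zero_apply, LinearMap.neg_apply, map_zero, map_sub,
        map_add, map_neg, mul_zero, zero_mul, sub_zero, zero_sub, sub_self, neg_sub, neg_neg] at e
      simp only [htri, hAs, map_sub, map_add, LinearMap.sub_apply, LinearMap.add_apply]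
      linear_combination (norm := abel) -e
  · rintro ⟨h26, h27⟩
    have key : ∀ T ∈ S, ∀ Y Z : A,
        ⁅T, Dop mul Y Z⁆ = Dop mul (T Y) Z + Dop mul Y (T Z) := by
      have hle : S ≤ derSub mul := by
        rw [hS]
        apply (LieSubalgebra.lieSpan_le).mpr
        rintro _ ⟨V, rfl⟩
        rw [SetLike.mem_coe, mem_derSub]
        intro Y Z
        ext W
        have e := h27 V Y Z W
        simp only [htri, hAs, map_sub, map_add] at e
        simp only [Ring.lie_def, Module.End.mul_apply, LinearMap.sub_apply,
          LinearMap.add_apply, Dop_apply, map_sub, map_add]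
        linear_combination (norm := abel) e
      exact fun T hT => (mem_derSub mul T).mp (hle hT)
    intro p q r hp hq hr
    obtain ⟨P, X⟩ := p
    obtain ⟨Q, Y⟩ := q
    obtain ⟨R, Z⟩ := r
    simp only at hp hq hr
    rw [hbr (P, X) (Q, Y), hbr (Q, Y) (R, Z), hbr (R, Z) (P, X)]
    rw [hbr, hbr, hbr]
    rw [Prod.mk_add_mk, Prod.mk_add_mk, Prod.mk_eq_zero]
    constructor
    · ext W
      have e1 := LinearMap.congr_fun (key P hp Y Z) W
      have e2 := LinearMap.congr_fun (key Q hq Z X) W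
      have e3 := LinearMap.congr_fun (key R hr X Y) W
      simp only [Dop_apply, Ring.lie_def, Module.End.mul_apply, LinearMap.sub_apply,
        LinearMap.add_apply, LinearMap.zero_apply, map_sub, map_add] at e1 e2 e3 ⊢
      linear_combination (norm := abel) -e1 - e2 - e3
    · have e := h26 X Y Z
      simp only [htri, hAs] at e
      simp only [Ring.lie_def, Module.End.mul_apply, LinearMap.sub_apply,
        LinearMap.add_apply, LinearMap.zero_apply, map_sub, map_add]
      linear_combination (norm := abel) e
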